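/- arXiv:1604.00451 — 2 statements merged into one kernel-verified Lean document; each statement's English description precedes it below -/
import Mathlib

section
/- In the ordinary case (additive formal group law), for a vector bundle splitting argument stated algebraically: for any sequence of non-negative integers I = (I₁,…,I_q) and J = (J₁,…,J_{n−q}) with juxtaposition IJ, the partial symmetrization over S_n/(S_q × S_{n−q}) of the product (x₁⋯x_q)^{n−q} s^L_I(x₁,…,x_q) s^L_J(x_{q+1},…,x_n) divided by Π_{1≤i≤q, q+1≤j≤n}(x_i +_L x̄_j) equals s^L_{IJ}(x₁,…,x_n). -/
/-- The universal Schur function of a sequence `I` of non-negative integers: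
`s^L_I(x_m) = Σ_{w∈S_m} w·( x^{I+ρ_{m−1}} / Π_{1≤i<j≤m}(x_i +_L x̄_j) )`, where `F` is
the formal sum `+_L` and `inv` the formal inverse of the formal group law, evaluated in
an ambient field `K`. -/
noncomputable def universalSchur {K : Type*} [Field K] (F : K → K → K) (inv : K → K)
    {m : ℕ} (x : Fin m → K) (I : Fin m → ℕ) : K :=
  ∑ w : Equiv.Perm (Fin m),
    (∏ i : Fin m, x (w i) ^ (I i + (m - 1 - (i : ℕ)))) /
      ∏ i : Fin m, ∏ j ∈ Finset.univ.filter (fun j => i < j), F (x (w i)) (inv (x (w j)))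

noncomputable def embPerm (q r : ℕ) (σ : Equiv.Perm (Fin q)) (τ : Equiv.Perm (Fin r)) :
    Equiv.Perm (Fin (q + r)) := finSumFinEquiv.permCongr (σ.sumCongr τ)

@[simp] lemma embPerm_castAdd (q r : ℕ) (σ : Equiv.Perm (Fin q)) (τ : Equiv.Perm (Fin r))
    (i : Fin q) : embPerm q r σ τ (Fin.castAdd r i) = Fin.castAdd r (σ i) := by
  simp [embPerm, Equiv.permCongr_apply]

@[simp] lemma embPerm_natAdd (q r : ℕ) (σ : Equiv.Perm (Fin q)) (τ : Equiv.Perm (Fin r))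
    (j : Fin r) : embPerm q r σ τ (Fin.natAdd q j) = Fin.natAdd q (τ j) := by
  simp [embPerm, Equiv.permCongr_apply]

lemma prod_filter_lt_split {K : Type*} [CommMonoid K] (q r : ℕ)
    (f : Fin (q + r) → Fin (q + r) → K) :
    (∏ i : Fin (q + r), ∏ j ∈ Finset.univ.filter (fun j => i < j), f i j)
    = ((∏ i : Fin q, ∏ j ∈ Finset.univ.filter (fun j => i < j),
          f (Fin.castAdd r i) (Fin.castAdd r j)) *
        ∏ i : Fin r, ∏ j ∈ Finset.univ.filter (fun j => i < j),
          f (Fin.natAdd q i) (Fin.natAdd q j)) *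
      ∏ i : Fin q, ∏ j : Fin r, f (Fin.castAdd r i) (Fin.natAdd q j) := by
  simp only [Finset.prod_filter]
  rw [Fin.prod_univ_add]
  have h1 : ∀ i : Fin q, (∏ j : Fin (q+r), if Fin.castAdd r i < j then f (Fin.castAdd r i) j else 1)
      = (∏ j : Fin q, if i < j then f (Fin.castAdd r i) (Fin.castAdd r j) else 1) *
        ∏ j : Fin r, f (Fin.castAdd r i) (Fin.natAdd q j) := by
    intro i
    rw [Fin.prod_univ_add]
    refine congrArg₂ (· * ·) ?_ ?_
    · exact Finset.prod_congr rfl fun j _ => if_congr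
        (by simp only [Fin.lt_def, Fin.coe_castAdd]) rfl rfl
    · refine Finset.prod_congr rfl fun j _ => ?_
      rw [if_pos (show Fin.castAdd r i < Fin.natAdd q j by
        simp only [Fin.lt_def, Fin.coe_castAdd, Fin.coe_natAdd]; omega)]
  have h2 : ∀ i : Fin r, (∏ j : Fin (q+r), if Fin.natAdd q i < j then f (Fin.natAdd q i) j else 1)
      = ∏ j : Fin r, if i < j then f (Fin.natAdd q i) (Fin.natAdd q j) else 1 := by
    intro i
    rw [Fin.prod_univ_add]
    have hz : (∏ j : Fin q, if Fin.natAdd q i < Fin.castAdd r j then f (Fin.natAdd q i) (Fin.castAdd r j) else 1) = 1 := by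
      apply Finset.prod_eq_one; intro j _
      rw [if_neg]
      simp only [Fin.lt_def, Fin.coe_castAdd, Fin.coe_natAdd]
      omega
    rw [hz, one_mul]
    exact Finset.prod_congr rfl fun j _ => if_congr
      (by simp only [Fin.lt_def, Fin.coe_natAdd]; omega) rfl rfl
  simp only [h1, h2]
  rw [Finset.prod_mul_distrib]
  exact mul_right_comm _ _ _

lemma term_key {K : Type*} [Field K] (F : K → K → K) (inv : K → K) (q r : ℕ)
    (x : Fin (q + r) → K) (I : Fin q → ℕ) (J : Fin r → ℕ)
    (w : Equiv.Perm (Fin (q + r))) :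
    ((∏ i : Fin q, x (w (Fin.castAdd r i))) ^ r *
        universalSchur F inv (fun i : Fin q => x (w (Fin.castAdd r i))) I *
        universalSchur F inv (fun j : Fin r => x (w (Fin.natAdd q j))) J) /
      ∏ i : Fin q, ∏ j : Fin r,
        F (x (w (Fin.castAdd r i))) (inv (x (w (Fin.natAdd q j))))
    = ∑ σ : Equiv.Perm (Fin q), ∑ τ : Equiv.Perm (Fin r),
        (∏ k : Fin (q + r),
            x ((w * embPerm q r σ τ) k) ^ (Fin.append I J k + (q + r - 1 - (k : ℕ)))) /
          ∏ i : Fin (q + r), ∏ j ∈ Finset.univ.filter (fun j => i < j),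
            F (x ((w * embPerm q r σ τ) i)) (inv (x ((w * embPerm q r σ τ) j))) := by
  simp only [universalSchur]
  rw [Finset.mul_sum, Finset.sum_div]
  refine Eq.trans ?_ Finset.sum_comm
  refine Finset.sum_congr rfl fun τ _ => ?_
  rw [Finset.mul_sum, Finset.sum_mul, Finset.sum_div]
  refine Finset.sum_congr rfl fun σ _ => ?_
  have hc : ∀ i : Fin q, (w * embPerm q r σ τ) (Fin.castAdd r i) = w (Fin.castAdd r (σ i)) := by
    intro i; simp [Equiv.Perm.mul_apply]
  have hb : ∀ j : Fin r, (w * embPerm q r σ τ) (Fin.natAdd q j) = w (Fin.natAdd q (τ j)) := by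
    intro j; simp [Equiv.Perm.mul_apply]
  -- numerator
  have hnum : (∏ k : Fin (q + r),
      x ((w * embPerm q r σ τ) k) ^ (Fin.append I J k + (q + r - 1 - (k : ℕ))))
      = ((∏ i : Fin q, x (w (Fin.castAdd r (σ i))) ^ (I i + (q - 1 - (i : ℕ)))) *
          (∏ i : Fin q, x (w (Fin.castAdd r i))) ^ r) *
        ∏ j : Fin r, x (w (Fin.natAdd q (τ j))) ^ (J j + (r - 1 - (j : ℕ))) := by
    rw [Fin.prod_univ_add]
    refine congrArg₂ (· * ·) ?_ ?_
    · have : ∀ i : Fin q,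
          x ((w * embPerm q r σ τ) (Fin.castAdd r i)) ^
            (Fin.append I J (Fin.castAdd r i) + (q + r - 1 - ((Fin.castAdd r i : Fin (q+r)) : ℕ)))
          = x (w (Fin.castAdd r (σ i))) ^ (I i + (q - 1 - (i : ℕ))) *
            x (w (Fin.castAdd r (σ i))) ^ r := by
        intro i
        rw [hc, Fin.append_left, ← pow_add]
        congr 1
        have := i.isLt
        simp only [Fin.coe_castAdd]
        omega
      rw [Finset.prod_congr rfl fun i _ => this i, Finset.prod_mul_distrib,
        Finset.prod_pow]
      congr 1
      exact congrArg (· ^ r) (Equiv.prod_comp σ (fun i => x (w (Fin.castAdd r i))))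
    · refine Finset.prod_congr rfl fun j _ => ?_
      rw [hb, Fin.append_right]
      congr 1
      simp only [Fin.coe_natAdd]
      omega
  -- denominator
  have hden : (∏ i : Fin (q + r), ∏ j ∈ Finset.univ.filter (fun j => i < j),
        F (x ((w * embPerm q r σ τ) i)) (inv (x ((w * embPerm q r σ τ) j))))
      = ((∏ i : Fin q, ∏ j ∈ Finset.univ.filter (fun j => i < j),
            F (x (w (Fin.castAdd r (σ i)))) (inv (x (w (Fin.castAdd r (σ j)))))) *
          ∏ i : Fin r, ∏ j ∈ Finset.univ.filter (fun j => i < j),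
            F (x (w (Fin.natAdd q (τ i)))) (inv (x (w (Fin.natAdd q (τ j)))))) *
        ∏ i : Fin q, ∏ j : Fin r,
          F (x (w (Fin.castAdd r i))) (inv (x (w (Fin.natAdd q j)))) := by
    rw [prod_filter_lt_split q r
      (fun i j => F (x ((w * embPerm q r σ τ) i)) (inv (x ((w * embPerm q r σ τ) j))))]
    simp only [hc, hb]
    congr 1
    rw [Equiv.prod_comp σ
      (fun i => ∏ j : Fin r, F (x (w (Fin.castAdd r i))) (inv (x (w (Fin.natAdd q (τ j))))))]
    exact Finset.prod_congr rfl fun i _ =>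
      Equiv.prod_comp τ (fun j => F (x (w (Fin.castAdd r i))) (inv (x (w (Fin.natAdd q j)))))
  rw [hnum, hden]
  simp only [div_eq_mul_inv, mul_inv]
  ring

/-- For sequences of non-negative integers `I = (I₁,…,I_q)` and `J = (J₁,…,J_r)` with
juxtaposition `IJ`, the partial symmetrization over `S_n/(S_q × S_r)` (realized as
`(1/(q!·r!)) Σ_{w∈S_n}` of the `(S_q × S_r)`-invariant summand, `n = q + r`) of the
product `(x₁⋯x_q)^r · s^L_I(x₁,…,x_q) · s^L_J(x_{q+1},…,x_n)` divided by
`Π_{1≤i≤q<j≤n}(x_i +_L x̄_j)` equals `s^L_{IJ}(x₁,…,x_n)`. -/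
theorem universalSchur_juxtaposition {K : Type*} [Field K] [CharZero K]
    (F : K → K → K) (inv : K → K) (q r : ℕ) (x : Fin (q + r) → K)
    (hx : Function.Injective x)
    (hne : ∀ i j : Fin (q + r), i ≠ j → F (x i) (inv (x j)) ≠ 0)
    (I : Fin q → ℕ) (J : Fin r → ℕ) :
    ((Nat.factorial q * Nat.factorial r : ℕ) : K)⁻¹ *
      ∑ w : Equiv.Perm (Fin (q + r)),
        ((∏ i : Fin q, x (w (Fin.castAdd r i))) ^ r *
            universalSchur F inv (fun i : Fin q => x (w (Fin.castAdd r i))) I *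
            universalSchur F inv (fun j : Fin r => x (w (Fin.natAdd q j))) J) /
          ∏ i : Fin q, ∏ j : Fin r,
            F (x (w (Fin.castAdd r i))) (inv (x (w (Fin.natAdd q j))))
    = universalSchur F inv x (Fin.append I J) := by
  set T : Equiv.Perm (Fin (q + r)) → K := fun u =>
    (∏ k : Fin (q + r), x (u k) ^ (Fin.append I J k + (q + r - 1 - (k : ℕ)))) /
      ∏ i : Fin (q + r), ∏ j ∈ Finset.univ.filter (fun j => i < j),
        F (x (u i)) (inv (x (u j))) with hT
  have step1 : (∑ w : Equiv.Perm (Fin (q + r)),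
      ((∏ i : Fin q, x (w (Fin.castAdd r i))) ^ r *
          universalSchur F inv (fun i : Fin q => x (w (Fin.castAdd r i))) I *
          universalSchur F inv (fun j : Fin r => x (w (Fin.natAdd q j))) J) /
        ∏ i : Fin q, ∏ j : Fin r,
          F (x (w (Fin.castAdd r i))) (inv (x (w (Fin.natAdd q j)))))
      = ∑ w : Equiv.Perm (Fin (q + r)), ∑ σ : Equiv.Perm (Fin q), ∑ τ : Equiv.Perm (Fin r),
          T (w * embPerm q r σ τ) :=
    Finset.sum_congr rfl fun w _ => term_key F inv q r x I J w
  rw [step1, Finset.sum_comm]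
  have step2 : ∀ σ : Equiv.Perm (Fin q),
      (∑ w : Equiv.Perm (Fin (q + r)), ∑ τ : Equiv.Perm (Fin r), T (w * embPerm q r σ τ))
      = ∑ τ : Equiv.Perm (Fin r), ∑ u : Equiv.Perm (Fin (q + r)), T u := by
    intro σ
    rw [Finset.sum_comm]
    refine Finset.sum_congr rfl fun τ _ => ?_
    exact Equiv.sum_comp (Equiv.mulRight (embPerm q r σ τ)) T
  rw [Finset.sum_congr rfl fun σ _ => step2 σ]
  simp only [Finset.sum_const, Finset.card_univ, Fintype.card_perm, Fintype.card_fin,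
    smul_smul, nsmul_eq_mul]
  rw [← mul_assoc, ← mul_assoc, show ((q.factorial * r.factorial : ℕ) : K)⁻¹ *
      (q.factorial : K) * (r.factorial : K) = 1 by
    have h1 : (q.factorial : K) ≠ 0 := by exact_mod_cast q.factorial_ne_zero
    have h2 : (r.factorial : K) ≠ 0 := by exact_mod_cast r.factorial_ne_zero
    push_cast
    field_simp, one_mul]
  rfl
end

section
/- Multiplying a universal Schur function by the c-th power of the product of all variables shifts the index: (x₁⋯x_n)^c · s^L_I(x₁,…,x_n) = s^L_{I+(c^n)}(x₁,…,x_n) for any sequence I of non-negative integers and any non-negative integer c, where I+(c^n) adds c to every entry of I. -/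
/-- Multiplying a universal Schur function by the `c`-th power of the product of all
variables shifts the index: `(x₁⋯x_n)^c · s^L_I(x_n) = s^L_{I+(c^n)}(x_n)` for any
sequence `I` of non-negative integers and any `c ≥ 0`. -/
theorem universalSchur_mul_prod_pow {K : Type*} [Field K] (F : K → K → K) (inv : K → K)
    (n : ℕ) (x : Fin n → K) (I : Fin n → ℕ) (c : ℕ) :
    (∏ i : Fin n, x i) ^ c * universalSchur F inv x I
      = universalSchur F inv x (fun i => I i + c) := by
  unfold universalSchur
  rw [Finset.mul_sum]
  refine Finset.sum_congr rfl fun w _ => ?_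
  rw [mul_div_assoc']
  congr 1
  rw [← Equiv.prod_comp w x, ← Finset.prod_pow, ← Finset.prod_mul_distrib]
  refine Finset.prod_congr rfl fun i _ => ?_
  rw [← pow_add]
  congr 1
  beta_reduce
  omega
end
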